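/- More generally, for any 0 ≤ α ≤ 1 and λ ∈ (0,1], Σ_{k≥1} (1 + k^{2r})^α (1 + λ k^{2r})^{-2} ≤ c λ^{-α − 1/(2r)} for a constant c depending only on r and α, provided 2 − α > 1/(2r) (which holds since α ≤ 1 ≤ 2 − 1/(2r) for r ≥ 1). -/

import Mathlib

open Finset

lemma aux_pow (p : ℕ) (hp : 1 ≤ p) {a : ℝ} (ha : 1 ≤ a) :
    a ^ p * (a + 2) ≤ (a + 1) ^ (p + 1) := by
  induction p, hp using Nat.le_induction with
  | base => ring_nf; nlinarith
  | succ p hp ih =>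
      have ha0 : (0:ℝ) ≤ a := by linarith
      calc a ^ (p+1) * (a+2) = a * (a ^ p * (a+2)) := by ring
        _ ≤ a * (a+1)^(p+1) := mul_le_mul_of_nonneg_left ih ha0
        _ ≤ (a+1) * (a+1)^(p+1) :=
            mul_le_mul_of_nonneg_right (by linarith) (by positivity)
        _ = (a+1)^(p+1+1) := by ring

lemma tele (p : ℕ) (hp : 1 ≤ p) {a : ℝ} (ha : 1 ≤ a) :
    ((a+1) ^ (p + 1))⁻¹ ≤ (a ^ p)⁻¹ - ((a+1) ^ p)⁻¹ := by
  have ha0 : (0:ℝ) < a := by linarith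
  have ha1 : (0:ℝ) < a + 1 := by linarith
  rw [le_sub_iff_add_le]
  have h1 : ((a+1) ^ (p + 1))⁻¹ + ((a+1) ^ p)⁻¹ = (a + 2) / (a+1)^(p+1) := by
    rw [pow_succ]
    field_simp
    ring
  rw [h1, div_le_iff₀ (by positivity), inv_mul_eq_div, le_div_iff₀ (by positivity)]
  calc (a+2) * a^p = a^p * (a+2) := by ring
    _ ≤ (a+1)^(p+1) := aux_pow p hp ha

lemma tail_sum (p : ℕ) (hp : 1 ≤ p) (N : ℕ) (hN : 1 ≤ N) (K : ℕ) :
    ∑ k ∈ range K, ((((N:ℝ) + k) + 1) ^ (p+1))⁻¹ ≤ (((N:ℝ)) ^ p)⁻¹ := by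
  have hNR : (1:ℝ) ≤ (N:ℝ) := by exact_mod_cast hN
  calc ∑ k ∈ range K, ((((N:ℝ) + k) + 1) ^ (p+1))⁻¹
      ≤ ∑ k ∈ range K, ((((N:ℝ) + k) ^ p)⁻¹ - (((N:ℝ) + (k+1)) ^ p)⁻¹) := by
        apply Finset.sum_le_sum
        intro k _
        have ha : (1:ℝ) ≤ (N:ℝ) + k := by
          have : (0:ℝ) ≤ (k:ℝ) := Nat.cast_nonneg k
          linarith
        have := tele p hp ha
        have hcast : ((N:ℝ) + ((k:ℕ)+1:ℕ)) = ((N:ℝ) + k) + 1 := by push_cast; ring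
        calc ((((N:ℝ) + k) + 1) ^ (p+1))⁻¹ ≤ (((N:ℝ)+k) ^ p)⁻¹ - ((((N:ℝ)+k)+1) ^ p)⁻¹ := this
          _ = (((N:ℝ)+k) ^ p)⁻¹ - (((N:ℝ) + ((k:ℝ)+1)) ^ p)⁻¹ := by ring_nf
    _ = (((N:ℝ) + (0:ℕ)) ^ p)⁻¹ - (((N:ℝ) + (K:ℕ)) ^ p)⁻¹ := by
        have := Finset.sum_range_sub' (fun i => (((N:ℝ) + (i:ℕ)) ^ p)⁻¹) K
        simpa [add_assoc] using this
    _ ≤ ((N:ℝ) ^ p)⁻¹ := by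
        have : (0:ℝ) ≤ (((N:ℝ) + (K:ℕ)) ^ p)⁻¹ := by positivity
        simp only [Nat.cast_zero, add_zero]
        linarith

lemma sum_f_bound (p : ℕ) (hp : 1 ≤ p) (lam : ℝ) (hlam : 0 < lam) (hlam1 : lam ≤ 1) (K : ℕ) :
    ∑ k ∈ range K, (1 + lam * ((k:ℝ)+1)^(p+1))⁻¹
      ≤ (1 + 2^p) * lam ^ (-(1/((p:ℝ)+1))) := by
  set β : ℝ := 1/((p:ℝ)+1) with hβ
  have hβ0 : 0 < β := by positivity
  have h1 : (1:ℝ) ≤ lam ^ (-β) :=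
    Real.one_le_rpow_of_pos_of_le_one_of_nonpos hlam hlam1 (by linarith)
  set N : ℕ := ⌊lam ^ (-β)⌋₊ with hN
  have hN1 : 1 ≤ N := Nat.le_floor (by exact_mod_cast h1)
  have hNR : (1:ℝ) ≤ (N:ℝ) := by exact_mod_cast hN1
  have hNle : (N:ℝ) ≤ lam ^ (-β) := Nat.floor_le (by positivity)
  have hNlt : lam ^ (-β) < (N:ℝ) + 1 := Nat.lt_floor_add_one _
  have hNge : lam ^ (-β) ≤ 2 * (N:ℝ) := by linarith
  have hf0 : ∀ k : ℕ, (0:ℝ) ≤ (1 + lam * ((k:ℝ)+1)^(p+1))⁻¹ := by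
    intro k; positivity
  calc ∑ k ∈ range K, (1 + lam * ((k:ℝ)+1)^(p+1))⁻¹
      ≤ ∑ k ∈ range (N + K), (1 + lam * ((k:ℝ)+1)^(p+1))⁻¹ := by
        apply Finset.sum_le_sum_of_subset_of_nonneg
        · exact Finset.range_subset_range.2 (Nat.le_add_left K N)
        · intro k _ _; exact hf0 k
    _ = (∑ k ∈ range N, (1 + lam * ((k:ℝ)+1)^(p+1))⁻¹)
        + ∑ k ∈ range K, (1 + lam * (((N + k : ℕ):ℝ)+1)^(p+1))⁻¹ :=
        Finset.sum_range_add _ N K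
    _ ≤ (N:ℝ) + lam⁻¹ * (((N:ℝ))^p)⁻¹ := by
        gcongr ?_ + ?_
        · calc ∑ k ∈ range N, (1 + lam * ((k:ℝ)+1)^(p+1))⁻¹
              ≤ ∑ _k ∈ range N, (1:ℝ) := by
                apply Finset.sum_le_sum
                intro k _
                rw [inv_le_one_iff₀]
                right
                have : 0 ≤ lam * ((k:ℝ)+1)^(p+1) := by positivity
                linarith
            _ = (N:ℝ) := by simp
        · calc ∑ k ∈ range K, (1 + lam * (((N + k : ℕ):ℝ)+1)^(p+1))⁻¹
              ≤ ∑ k ∈ range K, lam⁻¹ * ((((N:ℝ) + k) + 1)^(p+1))⁻¹ := by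
                apply Finset.sum_le_sum
                intro k _
                have hcast : ((N + k : ℕ):ℝ) = (N:ℝ) + k := by push_cast; ring
                rw [hcast, ← mul_inv]
                apply inv_anti₀
                · positivity
                · nlinarith [pow_pos (show (0:ℝ) < (N:ℝ) + k + 1 by positivity) (p+1)]
            _ = lam⁻¹ * ∑ k ∈ range K, ((((N:ℝ) + k) + 1)^(p+1))⁻¹ := by
                rw [Finset.mul_sum]
            _ ≤ lam⁻¹ * (((N:ℝ))^p)⁻¹ := by
                apply mul_le_mul_of_nonneg_left (tail_sum p hp N hN1 K) (by positivity)
    _ ≤ lam ^ (-β) + 2^p * lam ^ (-β) := by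
        apply add_le_add
        · exact hNle
        · -- lam⁻¹ * ((N:ℝ)^p)⁻¹ ≤ 2^p * lam ^ (-β)
          have hA : (0:ℝ) < (lam ^ (-β))^p := by positivity
          have hB : (0:ℝ) < ((N:ℝ))^p := by positivity
          have hAB : (lam ^ (-β))^p ≤ 2^p * ((N:ℝ))^p := by
            calc (lam ^ (-β))^p ≤ (2 * (N:ℝ))^p := by
                  apply pow_le_pow_left₀ (by positivity) hNge
              _ = 2^p * ((N:ℝ))^p := mul_pow 2 _ p
          have hinv : (((N:ℝ))^p)⁻¹ ≤ 2^p * ((lam ^ (-β))^p)⁻¹ := by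
            rw [← one_div, ← div_eq_mul_inv, div_le_div_iff₀ hB hA]
            linarith
          have hrw : ((lam ^ (-β))^p)⁻¹ = lam ^ (β * p) := by
            rw [← Real.rpow_natCast (lam ^ (-β)) p, ← Real.rpow_mul hlam.le,
              ← Real.rpow_neg hlam.le]
            ring_nf
          calc lam⁻¹ * (((N:ℝ))^p)⁻¹ ≤ lam⁻¹ * (2^p * ((lam ^ (-β))^p)⁻¹) := by
                apply mul_le_mul_of_nonneg_left hinv (by positivity)
            _ = 2^p * (lam ^ (-1:ℝ) * lam ^ (β * p)) := by
                rw [hrw, Real.rpow_neg_one]; ring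
            _ = 2^p * lam ^ (-β) := by
                rw [← Real.rpow_add hlam]
                congr 1
                have hp1 : ((p:ℝ)+1) ≠ 0 := by positivity
                rw [hβ]
                field_simp
                congr 1
                ring
    _ = (1 + 2^p) * lam ^ (-β) := by ring

open Finset

/-- Series estimate: for `r ≥ 1`, `0 ≤ α ≤ 1`, there is `c > 0` (depending only on `r, α`)
such that for all `0 < λ ≤ 1`,
`∑_{k≥1} (1 + k^(2r))^α (1 + λ k^(2r))⁻² ≤ c λ^(-(α + 1/(2r)))`. -/
theorem weighted_sum_inv_sq_bound (r : ℕ) (hr : 1 ≤ r) (α : ℝ) (hα0 : 0 ≤ α) (hα1 : α ≤ 1) :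
    ∃ c : ℝ, 0 < c ∧ ∀ lam : ℝ, 0 < lam → lam ≤ 1 →
      ∑' k : ℕ, (1 + ((k : ℝ) + 1) ^ (2 * r)) ^ α *
          ((1 + lam * ((k : ℝ) + 1) ^ (2 * r)) ^ 2)⁻¹ ≤
        c * lam ^ (-(α + 1 / (2 * r))) := by
  obtain ⟨p, hpm⟩ : ∃ p, 2 * r = p + 1 := ⟨2*r - 1, by omega⟩
  have hp : 1 ≤ p := by omega
  refine ⟨2 * (1 + 2^p), by positivity, ?_⟩
  intro lam hlam hlam1
  set β : ℝ := 1/((p:ℝ)+1) with hβ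
  have h2r : ((p:ℝ)+1) = 2*(r:ℝ) := by exact_mod_cast hpm.symm
  have hβeq : β = 1 / (2 * (r:ℝ)) := by rw [hβ, h2r]
  have key : ∀ k : ℕ, (1 + ((k : ℝ) + 1) ^ (2 * r)) ^ α *
          ((1 + lam * ((k : ℝ) + 1) ^ (2 * r)) ^ 2)⁻¹ ≤
          2 * lam ^ (-α) * (1 + lam * ((k : ℝ) + 1) ^ (2 * r))⁻¹ := by
    intro k
    have hk1 : (1:ℝ) ≤ (k:ℝ) + 1 := by
      have : (0:ℝ) ≤ (k:ℝ) := Nat.cast_nonneg k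
      linarith
    set x : ℝ := ((k:ℝ)+1)^(2*r) with hx
    have hx1 : (1:ℝ) ≤ x := one_le_pow₀ hk1
    set y : ℝ := 1 + lam * x with hy
    have hy1 : (1:ℝ) ≤ y := by nlinarith
    have hy0 : (0:ℝ) < y := by linarith
    have hnum : (1+x)^α ≤ 2 * lam ^ (-α) * y := by
      have h1 : (1+x)^α ≤ (2*x)^α := Real.rpow_le_rpow (by linarith) (by linarith) hα0
      have h2 : ((2:ℝ)*x)^α = 2^α * x^α := Real.mul_rpow (by norm_num) (by linarith)
      have h3 : (2:ℝ)^α ≤ 2 := by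
        have := Real.rpow_le_rpow_of_exponent_le (one_le_two) hα1
        rwa [Real.rpow_one] at this
      have h4 : x^α = lam ^ (-α) * (lam*x)^α := by
        rw [Real.mul_rpow hlam.le (by linarith), ← mul_assoc, ← Real.rpow_add hlam]
        simp
      have h5 : (lam*x)^α ≤ y := by
        calc (lam*x)^α ≤ y^α := Real.rpow_le_rpow (by positivity) (by nlinarith) hα0
          _ ≤ y^(1:ℝ) := Real.rpow_le_rpow_of_exponent_le hy1 hα1
          _ = y := Real.rpow_one y
      calc (1+x)^α ≤ 2^α * x^α := by rw [← h2]; exact h1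
        _ ≤ 2 * x^α := mul_le_mul_of_nonneg_right h3 (Real.rpow_nonneg (by linarith) α)
        _ = 2 * (lam^(-α) * (lam*x)^α) := by rw [h4]
        _ ≤ 2 * (lam^(-α) * y) := by
            apply mul_le_mul_of_nonneg_left _ (by norm_num)
            exact mul_le_mul_of_nonneg_left h5 (Real.rpow_nonneg hlam.le _)
        _ = 2 * lam^(-α) * y := by ring
    calc (1+x)^α * (y^2)⁻¹ ≤ (2*lam^(-α)*y) * (y^2)⁻¹ :=
          mul_le_mul_of_nonneg_right hnum (by positivity)
      _ = 2*lam^(-α) * y⁻¹ := by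
          rw [sq]
          field_simp
  apply Real.tsum_le_of_sum_range_le
  · intro k
    positivity
  · intro K
    calc ∑ k ∈ range K, (1 + ((k : ℝ) + 1) ^ (2 * r)) ^ α *
            ((1 + lam * ((k : ℝ) + 1) ^ (2 * r)) ^ 2)⁻¹
        ≤ ∑ k ∈ range K, 2 * lam ^ (-α) * (1 + lam * ((k:ℝ)+1)^(2*r))⁻¹ :=
          Finset.sum_le_sum (fun k _ => key k)
      _ = 2 * lam ^ (-α) * ∑ k ∈ range K, (1 + lam * ((k:ℝ)+1)^(p+1))⁻¹ := by
          rw [← Finset.mul_sum, hpm]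
      _ ≤ 2 * lam ^ (-α) * ((1 + 2^p) * lam ^ (-β)) :=
          mul_le_mul_of_nonneg_left (sum_f_bound p hp lam hlam hlam1 K) (by positivity)
      _ = (2 * (1 + 2^p)) * (lam ^ (-α) * lam ^ (-β)) := by ring
      _ = 2 * (1 + 2 ^ p) * lam ^ (-(α + 1 / (2 * (r:ℝ)))) := by
          rw [← Real.rpow_add hlam, hβeq]
          congr 1
          ring
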